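/- Let p1 be a prime, m ≥ 1, N = 2p1^m, and let p be an odd prime not dividing N such that 2 belongs to the subgroup ⟨p⟩ of (Z/p1^m Z)^* and gcd(p1, p−1) = 1. Let f = ord_N(p), q = p^f, and let χ_N be a multiplicative character of F_q of order N. Then G_q(χ_N) = G_q(χ_N^{p1^m}), i.e., the Gauss sum of χ_N equals the Gauss sum of the quadratic character χ_N^{p1^m} of F_q. -/

import Mathlib

open Finset

/-- The Gauss sum `G_q(χ) = Σ_{x∈𝔽_q^*} χ(x) ψ(x)` of a multiplicative character `χ`,
where `ψ(x) = ζ_p^{Tr_{q/p}(x)}` is the canonical additive character of `𝔽_q`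
(`ζ_p = exp(2πi/p)`). -/
noncomputable def gaussSumC (p : ℕ) (F : Type*) [Field F] [Fintype F]
    [Algebra (ZMod p) F] (χ : MulChar F ℂ) : ℂ :=
  ∑ x : F, χ x *
    Complex.exp (2 * Real.pi * Complex.I * ((Algebra.trace (ZMod p) F x).val : ℂ) / p)

section Aux

variable {F : Type*} [Field F] [Fintype F]

/-- Counting square roots via a character of order 2. -/
lemma eta_count [DecidableEq F] (hF2 : ringChar F ≠ 2) {η : MulChar F ℂ}
    (hη2 : η ^ 2 = 1) (hη : η ≠ 1) (s : F) :
    ((Finset.univ.filter fun u : F => u * u = s).card : ℂ) = 1 + η s := by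
  have h2 : (2 : F) ≠ 0 := Ring.two_ne_zero hF2
  have hval : ∀ x : Fˣ, (η (x : F)) ^ 2 = 1 := by
    intro x
    rw [← MulChar.pow_apply' η two_ne_zero, hη2, MulChar.one_apply_coe]
  by_cases hs0 : s = 0
  · subst hs0
    have : (Finset.univ.filter fun u : F => u * u = 0) = {0} := by
      ext u; simp [mul_self_eq_zero]
    rw [this, MulChar.map_nonunit η (by simp)]
    simp
  by_cases hsq : IsSquare s
  · obtain ⟨c, hc⟩ := hsq
    have hc0 : c ≠ 0 := by rintro rfl; simp at hc; exact hs0 hc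
    have hfil : (Finset.univ.filter fun u : F => u * u = s) = {c, -c} := by
      ext u
      simp only [mem_filter, mem_univ, true_and, mem_insert, mem_singleton, hc]
      constructor
      · intro h; exact mul_self_eq_mul_self_iff.mp h
      · rintro (rfl | rfl) <;> ring
    have hcne : c ≠ -c := by
      intro h
      apply hc0
      have : (2 : F) * c = 0 := by rw [two_mul]; nth_rewrite 1 [h]; ring
      rcases mul_eq_zero.mp this with h' | h'
      · exact absurd h' h2
      · exact h'
    rw [hfil, Finset.card_insert_of_notMem (by simpa using hcne), Finset.card_singleton]
    have hcu : IsUnit c := isUnit_iff_ne_zero.mpr hc0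
    have : η s = 1 := by
      rw [hc, map_mul, ← sq]
      have := hval hcu.unit
      rwa [hcu.unit_spec] at this
    rw [this]; norm_num
  · have hfil : (Finset.univ.filter fun u : F => u * u = s) = ∅ := by
      ext u
      simp only [mem_filter, mem_univ, true_and, Finset.notMem_empty, iff_false]
      exact fun h => hsq ⟨u, h.symm⟩
    obtain ⟨g, hg⟩ := IsCyclic.exists_generator (α := Fˣ)
    have hgen : ∀ x : Fˣ, ∃ k : ℕ, g ^ k = x := fun x =>
      mem_powers_iff_mem_zpowers.mpr (hg x)
    have hgval : η (g : F) = -1 := by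
      have h1 := hval g
      have hfac : (η (g : F) - 1) * (η (g : F) + 1) = 0 := by ring_nf; linear_combination h1
      rcases mul_eq_zero.mp hfac with h' | h'
      · exfalso
        apply hη
        rw [MulChar.eq_one_iff]
        intro x
        obtain ⟨k, hk⟩ := hgen x
        rw [← hk, Units.val_pow_eq_pow_val, map_pow, sub_eq_zero.mp h', one_pow]
      · exact eq_neg_of_add_eq_zero_left h'

    have hs0' : s ≠ 0 := hs0
    have hsu : IsUnit s := isUnit_iff_ne_zero.mpr hs0'
    obtain ⟨k, hk⟩ := hgen hsu.unit
    have hkodd : Odd k := by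
      rcases Nat.even_or_odd k with he | ho
      · exfalso
        obtain ⟨j, hj⟩ := he
        apply hsq
        refine ⟨((g ^ j : Fˣ) : F), ?_⟩
        have : s = ((g ^ k : Fˣ) : F) := by rw [hk, hsu.unit_spec]
        rw [this, hj, ← Units.val_mul, ← pow_add]
      · exact ho
    have hηs : η s = -1 := by
      have : s = ((g : F)) ^ k := by
        rw [← hsu.unit_spec, ← hk, Units.val_pow_eq_pow_val]
      rw [this, map_pow, hgval, hkodd.neg_one_pow]
    rw [hfil, hηs]
    simp

/-- The substitution `x = (1+u)/2` identity: `J(χ,χ) = χ(4)⁻¹ J(η,χ)` when `χ(4⁻¹)=1`. -/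
lemma jacobi_sub [DecidableEq F] (hF2 : ringChar F ≠ 2) {χ η : MulChar F ℂ}
    (hχ : χ ≠ 1) (hη2 : η ^ 2 = 1) (hη : η ≠ 1) (hχ4 : χ ((4 : F)⁻¹) = 1) :
    jacobiSum χ χ = jacobiSum η χ := by
  have h2 : (2 : F) ≠ 0 := Ring.two_ne_zero hF2
  have key : ∀ u : F, χ ((1 + u) * (2 : F)⁻¹) * χ (1 - (1 + u) * (2 : F)⁻¹)
      = χ (1 - u * u) := by
    intro u
    rw [← map_mul]
    have h4 : (4 : F) ≠ 0 := by
      have : (4 : F) = 2 * 2 := by norm_num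
      rw [this]; exact mul_ne_zero h2 h2
    have heq : (1 + u) * (2 : F)⁻¹ * (1 - (1 + u) * (2 : F)⁻¹)
        = (1 - u * u) * (4 : F)⁻¹ := by
      field_simp
      ring
    rw [heq, map_mul, hχ4, mul_one]
  have step1 : jacobiSum χ χ = ∑ u : F, χ (1 - u * u) := by
    rw [jacobiSum,
      ← Equiv.sum_comp ((Equiv.addLeft (1 : F)).trans (Equiv.mulRight₀ (2 : F)⁻¹
        (inv_ne_zero h2))) (fun x => χ x * χ (1 - x))]
    exact Finset.sum_congr rfl fun u _ => key u
  have step2 : ∑ u : F, χ (1 - u * u)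
      = ∑ s : F, ((Finset.univ.filter fun u : F => u * u = s).card : ℂ) * χ (1 - s) := by
    rw [← Finset.sum_fiberwise_of_maps_to' (t := (Finset.univ : Finset F))
      (g := fun u : F => u * u) (fun _ _ => Finset.mem_univ _) (fun s => χ (1 - s))]
    exact Finset.sum_congr rfl fun s _ => by rw [Finset.sum_const, nsmul_eq_mul]
  have step3 : ∑ s : F, χ (1 - s) = 0 := by
    have h := Equiv.sum_comp (Equiv.subLeft (1 : F)) (fun x : F => χ x)
    simp only [Equiv.subLeft_apply] at h
    rw [h]
    exact MulChar.sum_eq_zero_of_ne_one hχ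
  calc jacobiSum χ χ = ∑ s : F, (1 + η s) * χ (1 - s) := by
        rw [step1, step2]
        exact Finset.sum_congr rfl fun s _ => by rw [eta_count hF2 hη2 hη]
    _ = (∑ s : F, χ (1 - s)) + ∑ s : F, η s * χ (1 - s) := by
        rw [← Finset.sum_add_distrib]
        exact Finset.sum_congr rfl fun s _ => by ring
    _ = jacobiSum η χ := by rw [step3, zero_add]; rfl

end Aux

theorem gauss_sum_eq_quadratic_gauss_sum
    (p1 m N p f : ℕ)
    (hp1 : p1.Prime) (hm : 1 ≤ m) (hN : N = 2 * p1 ^ m)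
    (hp : p.Prime) (hpodd : Odd p) (hpN : ¬ p ∣ N)
    (h2 : ∃ k : ℕ, (p : ZMod (p1 ^ m)) ^ k = 2)
    (hcop : Nat.Coprime p1 (p - 1))
    (hf : f = orderOf (p : ZMod N))
    (F : Type*) [Field F] [Fintype F] [Algebra (ZMod p) F]
    (hF : Fintype.card F = p ^ f)
    (χ : MulChar F ℂ) (hχ : orderOf χ = N) :
    gaussSumC p F χ = gaussSumC p F (χ ^ p1 ^ m) := by
  classical
  haveI : Fact p.Prime := ⟨hp⟩
  haveI : NeZero p := ⟨hp.ne_zero⟩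
  set t := p1 ^ m with ht
  -- p1 is odd
  have hp1ne2 : p1 ≠ 2 := by
    rintro rfl
    have hdvd : 2 ∣ p - 1 := by
      obtain ⟨j, hj⟩ := hpodd
      omega
    have h1 := Nat.Coprime.eq_one_of_dvd hcop hdvd
    exact (by norm_num : (2:ℕ) ≠ 1) h1
  have hp1odd : Odd p1 := hp1.odd_of_ne_two hp1ne2
  have hp1ge3 : 3 ≤ p1 := by
    have := hp1.two_le
    omega
  have htodd : Odd t := hp1odd.pow
  have htge3 : 3 ≤ t := le_trans hp1ge3 (Nat.le_self_pow (by omega) p1)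
  have ht0 : 0 < t := by omega
  -- characteristic of F
  have hinj : Function.Injective (algebraMap (ZMod p) F) := (algebraMap (ZMod p) F).injective
  haveI hcharF : CharP F p := charP_of_injective_algebraMap hinj p
  have hpne2 : p ≠ 2 := by
    rintro rfl
    exact (Nat.not_odd_iff_even.mpr (by norm_num)) hpodd
  have hF2 : ringChar F ≠ 2 := by rw [ringChar.eq F p]; exact hpne2
  have hcard0 : ((Fintype.card F : ℂ)) ≠ 0 := Nat.cast_ne_zero.mpr Fintype.card_ne_zero
  -- order bookkeeping
  have hχord : orderOf χ = 2 * t := by rw [hχ, hN]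
  set η : MulChar F ℂ := χ ^ t with hη
  set χ' : MulChar F ℂ := χ ^ (t + 1) with hχ'
  have hηord : orderOf η = 2 := by
    rw [hη, orderOf_pow' χ ht0.ne', hχord, Nat.gcd_eq_right (dvd_mul_left t 2),
      Nat.mul_div_cancel _ ht0]
  have hgcd2 : Nat.gcd (2 * t) (t + 1) = 2 := by
    have hc : Nat.Coprime t (t + 1) := by simp
    have h1 : Nat.gcd (t * 2) (t + 1) = Nat.gcd 2 (t + 1) := Nat.Coprime.gcd_mul_left_cancel 2 hc
    have h2 : Nat.gcd 2 (t + 1) = 2 := Nat.gcd_eq_left (by obtain ⟨j, hj⟩ := htodd; omega)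
    rw [mul_comm, h1, h2]
  have hχ'ord : orderOf χ' = t := by
    rw [hχ', orderOf_pow' χ (by omega), hχord, hgcd2]
    omega
  have hη1 : η ≠ 1 := by
    intro h; rw [h, orderOf_one] at hηord; omega
  have hη2 : η ^ 2 = 1 := by rw [← hηord]; exact pow_orderOf_eq_one η
  have hχ'1 : χ' ≠ 1 := by
    intro h; rw [h, orderOf_one] at hχ'ord; omega
  have hχ1 : χ ≠ 1 := by
    intro h; rw [h, orderOf_one] at hχord; omega
  have hχ'χ' : χ' * χ' ≠ 1 := by
    intro h
    have : orderOf χ' ∣ 2 := orderOf_dvd_of_pow_eq_one (by rw [sq]; exact h)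
    rw [hχ'ord] at this
    have := Nat.le_of_dvd (by norm_num) this
    omega
  have hmul : η * χ' = χ := by
    rw [hη, hχ', ← pow_add]
    have : t + (t + 1) = 2 * t + 1 := by ring
    rw [this, pow_add, pow_one, ← hχord, pow_orderOf_eq_one, one_mul]
  -- the canonical additive character
  have hζ : IsPrimitiveRoot (Complex.exp (2 * Real.pi * Complex.I / p)) p :=
    Complex.isPrimitiveRoot_exp p hp.ne_zero
  set ψ₀ : AddChar (ZMod p) ℂ := AddChar.zmodChar p hζ.pow_eq_one with hψ₀
  set ψ : AddChar F ℂ :=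
    ψ₀.compAddMonoidHom (Algebra.trace (ZMod p) F).toAddMonoidHom with hψ
  have hψapp : ∀ x : F,
      ψ x = Complex.exp (2 * Real.pi * Complex.I / p) ^ (Algebra.trace (ZMod p) F x).val := by
    intro x
    rw [hψ, AddChar.compAddMonoidHom_apply, hψ₀, AddChar.zmodChar_apply]
    rfl
  have hbridge : ∀ ξ : MulChar F ℂ, gaussSumC p F ξ = gaussSum ξ ψ := by
    intro ξ
    rw [gaussSumC, gaussSum]
    refine Finset.sum_congr rfl fun x _ => ?_
    rw [hψapp x, ← Complex.exp_nat_mul]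
    congr 2
    ring
  -- trace nondegeneracy and primitivity of ψ
  haveI : Algebra.IsAlgebraic (ZMod p) F := Algebra.IsAlgebraic.of_finite _ _
  have hψprim : ψ.IsPrimitive := by
    apply AddChar.IsPrimitive.of_ne_one
    have hex : ∃ a : F, Algebra.trace (ZMod p) F a ≠ 0 := by
      by_contra hcon
      push_neg at hcon
      have hnd := traceForm_nondegenerate (ZMod p) F
      have h1 := hnd.1 1 (fun y => by
        rw [Algebra.traceForm_apply, one_mul]; exact hcon y)
      exact one_ne_zero h1
    obtain ⟨a, ha⟩ := hex
    rw [AddChar.ne_one_iff]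
    refine ⟨a, fun hcon => ha ?_⟩
    have hprim0 : ψ₀.IsPrimitive := by
      rw [hψ₀]
      exact AddChar.zmodChar_primitive_of_primitive_root p hζ
    have := (hprim0.zmod_char_eq_one_iff p (Algebra.trace (ZMod p) F a)).mp
    apply this
    rw [hψ, AddChar.compAddMonoidHom_apply] at hcon
    exact hcon
  -- Frobenius invariance of Gauss sums
  haveI : ExpChar F p := ExpChar.prime hp
  let fr : F →ₐ[ZMod p] F :=
    { frobenius F p with
      commutes' := fun c => by
        show (frobenius F p) (algebraMap (ZMod p) F c) = algebraMap (ZMod p) F c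
        rw [frobenius_def, ← map_pow, ZMod.pow_card] }
  have hfr_bij : Function.Bijective fr :=
    Finite.injective_iff_bijective.mp (frobenius_inj F p)
  let e : F ≃ₐ[ZMod p] F := AlgEquiv.ofBijective fr hfr_bij
  have heapp : ∀ x : F, e x = x ^ p := fun x => rfl
  have htr : ∀ x : F, Algebra.trace (ZMod p) F (x ^ p) = Algebra.trace (ZMod p) F x := by
    intro x
    have := Algebra.trace_eq_of_algEquiv e x
    rwa [heapp] at this
  have hfrob : ∀ ξ : MulChar F ℂ, gaussSum (ξ ^ p) ψ = gaussSum ξ ψ := by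
    intro ξ
    conv_rhs => rw [gaussSum, ← Equiv.sum_comp e.toEquiv (fun x => ξ x * ψ x)]
    rw [gaussSum]
    refine Finset.sum_congr rfl fun x _ => ?_
    show (ξ ^ p) x * ψ x = ξ (e x) * ψ (e x)
    rw [heapp, MulChar.pow_apply' ξ hp.ne_zero, ← map_pow]
    congr 1
    rw [hψapp, hψapp, htr]
  have hfrobk : ∀ (k : ℕ) (ξ : MulChar F ℂ), gaussSum (ξ ^ p ^ k) ψ = gaussSum ξ ψ := by
    intro k
    induction k with
    | zero => intro ξ; simp
    | succ n ih =>
      intro ξ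
      rw [pow_succ, pow_mul]
      exact (hfrob _).trans (ih ξ)
  -- exponent reduction χ'^2 = χ'^(p^k)
  obtain ⟨k, hk⟩ := h2
  have hmod : p ^ k ≡ 2 [MOD t] := by
    have : ((p ^ k : ℕ) : ZMod t) = ((2 : ℕ) : ZMod t) := by push_cast; rw [hk]
    exact (ZMod.natCast_eq_natCast_iff _ _ _).mp this
  have hexp : χ' ^ p ^ k = χ' ^ 2 := by
    rw [pow_eq_pow_iff_modEq, hχ'ord]
    exact hmod
  -- χ' is trivial on the prime field
  have hker : ∀ x : F, x ^ (p - 1) = 1 → χ' x = 1 := by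
    intro x hx
    have hx0 : x ≠ 0 := by
      intro h
      rw [h, zero_pow (by have := hp.two_le; omega)] at hx
      exact zero_ne_one hx
    have hxu : IsUnit x := isUnit_iff_ne_zero.mpr hx0
    have h1 : χ' x ^ (p - 1) = 1 := by rw [← map_pow, hx, map_one]
    have h2' : χ' x ^ t = 1 := by
      rw [← MulChar.pow_apply' χ' ht0.ne', ← hχ'ord, pow_orderOf_eq_one, ← hxu.unit_spec,
        MulChar.one_apply_coe]
    have hdvd : orderOf (χ' x) ∣ Nat.gcd t (p - 1) :=
      Nat.dvd_gcd (orderOf_dvd_of_pow_eq_one h2') (orderOf_dvd_of_pow_eq_one h1)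
    have hgcd1 : Nat.gcd t (p - 1) = 1 := Nat.Coprime.pow_left m hcop
    rw [hgcd1, Nat.dvd_one] at hdvd
    exact orderOf_eq_one_iff.mp hdvd
  have hχ'4 : χ' ((4 : F)⁻¹) = 1 := by
    apply hker
    have h4p : ((4 : ℕ) : ZMod p) ≠ 0 := by
      rw [Ne, ZMod.natCast_eq_zero_iff]
      intro hdvd
      have h22 : p ∣ 2 := hp.dvd_of_dvd_pow (show p ∣ 2 ^ 2 by norm_num; exact hdvd)
      exact hpne2 ((Nat.prime_dvd_prime_iff_eq hp Nat.prime_two).mp h22)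
    have h41 : (4 : F) ^ (p - 1) = 1 := by
      have h4F : (4 : F) = algebraMap (ZMod p) F ((4 : ℕ) : ZMod p) := by
        rw [map_natCast]; norm_num
      rw [h4F, ← map_pow, ZMod.pow_card_sub_one_eq_one h4p, map_one]
    rw [inv_pow, h41, inv_one]
  -- assemble
  have hGne : gaussSum χ' ψ ≠ 0 := gaussSum_ne_zero_of_nontrivial hcard0 hχ'1 hψprim
  have hG2eq : gaussSum (χ' ^ 2) ψ = gaussSum χ' ψ := by rw [← hexp]; exact hfrobk k χ'
  have hG1 := jacobiSum_mul_nontrivial hχ'χ' ψ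
  rw [show χ' * χ' = χ' ^ 2 from (sq χ').symm, hG2eq] at hG1
  have hJ1 : jacobiSum χ' χ' = gaussSum χ' ψ := mul_left_cancel₀ hGne hG1
  have hG3 := jacobiSum_mul_nontrivial (χ := η) (φ := χ') (by rw [hmul]; exact hχ1) ψ
  rw [hmul] at hG3
  have hJeq : jacobiSum χ' χ' = jacobiSum η χ' := jacobi_sub hF2 hχ'1 hη2 hη1 hχ'4
  rw [← hJeq, hJ1] at hG3
  have hfinal : gaussSum χ ψ = gaussSum η ψ := mul_right_cancel₀ hGne hG3
  rw [hbridge, hbridge]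
  exact hfinal
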